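/- If the poset Q is a well quasi-order, then the quotient join-semilattice Q^⊔ of nonempty finite subsets of Q ordered by S ≤* R iff every element of S is below some element of R is also a well quasi-order (well founded with no infinite antichains). -/

import Mathlib

/-- A preorder-like relation `r` is a well quasi-order: there is no infinite strictly
descending chain and no infinite antichain. -/
def IsWqo {α : Type*} (r : α → α → Prop) : Prop :=
  (¬ ∃ f : ℕ → α, ∀ n : ℕ, r (f (n + 1)) (f n) ∧ ¬ r (f n) (f (n + 1))) ∧
  (¬ ∃ f : ℕ → α, ∀ m n : ℕ, m ≠ n → ¬ r (f m) (f n))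

/-- The preorder `≤*` on nonempty finite subsets of a preorder `Q`. -/
def leStar {Q : Type*} [Preorder Q] (S R : Finset Q) : Prop :=
  ∀ s ∈ S, ∃ r ∈ R, s ≤ r

private lemma sublistForall₂_mem {α β : Type*} {r : α → β → Prop} {l₁ : List α} {l₂ : List β}
    (h : List.SublistForall₂ r l₁ l₂) : ∀ s ∈ l₁, ∃ t ∈ l₂, r s t := by
  induction h with
  | nil => simp
  | cons hr _ ih =>
    intro s hs
    rcases List.mem_cons.1 hs with rfl | hs
    · exact ⟨_, List.mem_cons_self, hr⟩
    · obtain ⟨t, ht, hrt⟩ := ih s hs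
      exact ⟨t, List.mem_cons_of_mem _ ht, hrt⟩
  | cons_right _ ih =>
    intro s hs
    obtain ⟨t, ht, hrt⟩ := ih s hs
    exact ⟨t, List.mem_cons_of_mem _ ht, hrt⟩

/-- A wqo (in the chain/antichain sense) is partially well-ordered on `univ`. -/
private lemma pwo_of_isWqo {Q : Type*} [Preorder Q]
    (hQ : IsWqo ((· ≤ ·) : Q → Q → Prop)) :
    (Set.univ : Set Q).PartiallyWellOrderedOn (· ≤ ·) := by
  rw [Set.partiallyWellOrderedOn_iff_exists_lt]
  intro f _
  by_contra hbad
  push_neg at hbad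
  have bad : ∀ m n : ℕ, m < n → ¬ f m ≤ f n := by
    intro m n hmn hle
    exact hbad m n hmn hle
  obtain ⟨g, hg | hg⟩ :=
    exists_increasing_or_nonincreasing_subseq (fun a b : Q => b ≤ a) f
  · -- descending chain
    exact hQ.1 ⟨fun n => f (g n), fun n =>
      ⟨hg n (n + 1) (Nat.lt_succ_self n),
        bad (g n) (g (n + 1)) (g.strictMono (Nat.lt_succ_self n))⟩⟩
  · -- antichain
    refine hQ.2 ⟨fun n => f (g n), fun m n hmn => ?_⟩
    rcases hmn.lt_or_gt with h | h
    · exact bad (g m) (g n) (g.strictMono h)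
    · exact hg n m h

/-- If `Q` is a well quasi-order, then `Q^⊔` (nonempty finite subsets of `Q` under `≤*`)
is a well quasi-order. -/
theorem stmt4 {Q : Type*} [Preorder Q]
    (hQ : IsWqo ((· ≤ ·) : Q → Q → Prop)) :
    IsWqo (fun A B : {S : Finset Q // S.Nonempty} => leStar A.1 B.1) := by
  have hpwo := (pwo_of_isWqo hQ).partiallyWellOrderedOn_sublistForall₂ (r := (· ≤ ·))
  -- key: every sequence of nonempty finsets is good
  have key : ∀ F : ℕ → {S : Finset Q // S.Nonempty},
      ∃ m n : ℕ, m < n ∧ leStar (F m).1 (F n).1 := by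
    intro F
    obtain ⟨m, n, hmn, h⟩ := hpwo.exists_lt (f := fun n => (F n).1.toList) (fun n x _ => Set.mem_univ x)
    refine ⟨m, n, hmn, fun s hs => ?_⟩
    obtain ⟨t, ht, hle⟩ := sublistForall₂_mem h s ((Finset.mem_toList).2 hs)
    exact ⟨t, (Finset.mem_toList).1 ht, hle⟩
  constructor
  · rintro ⟨F, hF⟩
    obtain ⟨m, n, hmn, h⟩ := key F
    -- chain transitivity: for m ≤ n, leStar (F n) (F m)
    have chain : ∀ a b : ℕ, a ≤ b → leStar (F b).1 (F a).1 := by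
      intro a b hab
      induction hab with
      | refl => intro s hs; exact ⟨s, hs, le_refl s⟩
      | step _ ih =>
        intro s hs
        obtain ⟨t, ht, hst⟩ := (hF _).1 s hs
        obtain ⟨u, hu, htu⟩ := ih t ht
        exact ⟨u, hu, le_trans hst htu⟩
    -- h : leStar (F m) (F n); chain gives leStar (F n) (F (m+1)); so leStar (F m) (F (m+1))
    have h2 : leStar (F n).1 (F (m + 1)).1 := chain (m + 1) n hmn
    refine (hF m).2 (fun s hs => ?_)
    obtain ⟨t, ht, hst⟩ := h s hs
    obtain ⟨u, hu, htu⟩ := h2 t ht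
    exact ⟨u, hu, le_trans hst htu⟩
  · rintro ⟨F, hF⟩
    obtain ⟨m, n, hmn, h⟩ := key F
    exact hF m n hmn.ne h
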